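/- Let L be a complete OML and let x ≤ y in L. Then the interval [x, y], with the induced order and the orthocomplementation z ↦ x ⊔ (zᶜ ⊓ y), is a complete OML; moreover, if L is algebraic then [x, y] is algebraic, and if L is completely hereditarily atomic then [x, y] is completely hereditarily atomic. -/

import Mathlib

/-- A complete orthomodular lattice. -/
class CompleteOML (α : Type*) extends CompleteLattice α, Compl α where
  compl_compl : ∀ x : α, xᶜᶜ = x
  compl_antitone : ∀ x y : α, x ≤ y → yᶜ ≤ xᶜ
  inf_compl : ∀ x : α, x ⊓ xᶜ = ⊥
  sup_compl : ∀ x : α, x ⊔ xᶜ = ⊤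
  orthomodular : ∀ x y : α, x ≤ y → x ⊔ (xᶜ ⊓ y) = y

/-- The orthocomplementation of the interval `[x, y]`: `z ↦ x ⊔ (zᶜ ⊓ y)`. -/
def intvCompl {α : Type*} [CompleteOML α] (x y z : α) : α := x ⊔ (zᶜ ⊓ y)

/-- `c` is a compact element of the interval `[x, y]` (whose suprema are given by
`T ↦ x ⊔ sSup T`). -/
def IntvCompact {α : Type*} [CompleteOML α] (x y c : α) : Prop :=
  c ∈ Set.Icc x y ∧ ∀ T : Set α, T ⊆ Set.Icc x y → c ≤ x ⊔ sSup T →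
    ∃ F : Finset α, ↑F ⊆ T ∧ c ≤ x ⊔ sSup (↑F : Set α)

/-- A complete subalgebra of the interval `[x, y]`: a subset of `[x, y]` closed under
the interval orthocomplementation and under the interval suprema and infima. -/
def IntvCompleteSub {α : Type*} [CompleteOML α] (x y : α) (S : Set α) : Prop :=
  S ⊆ Set.Icc x y ∧ (∀ z ∈ S, intvCompl x y z ∈ S) ∧
    (∀ T : Set α, T ⊆ S → x ⊔ sSup T ∈ S) ∧ (∀ T : Set α, T ⊆ S → y ⊓ sInf T ∈ S)

/-- A subset `S` of the interval `[x, y]` (a poset with least element `x`) is atomic. -/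
def IntvAtomic {α : Type*} [CompleteOML α] (x : α) (S : Set α) : Prop :=
  ∀ z ∈ S, z ≠ x → ∃ a ∈ S, a ≠ x ∧ (∀ s ∈ S, ¬ (x < s ∧ s < a)) ∧ a ≤ z

/-- A complete lattice is algebraic if every element is the supremum of the compact
elements below it. -/
def IsAlgebraicLattice (α : Type*) [CompleteLattice α] : Prop :=
  ∀ x : α, x = sSup {c : α | IsCompactElement c ∧ c ≤ x}


namespace OMLAux
variable {α : Type*} [CompleteOML α]

lemma cc (a : α) : aᶜᶜ = a := CompleteOML.compl_compl a
lemma canti {a b : α} (h : a ≤ b) : bᶜ ≤ aᶜ := CompleteOML.compl_antitone a b h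
lemma om {a b : α} (h : a ≤ b) : a ⊔ (aᶜ ⊓ b) = b := CompleteOML.orthomodular a b h

lemma le_compl_swap {a b : α} (h : a ≤ bᶜ) : b ≤ aᶜ := by
  have := canti h; rwa [cc] at this

lemma compl_sup (a b : α) : (a ⊔ b)ᶜ = aᶜ ⊓ bᶜ := by
  apply le_antisymm
  · exact le_inf (canti le_sup_left) (canti le_sup_right)
  · apply le_compl_swap
    exact sup_le (le_compl_swap inf_le_left) (le_compl_swap inf_le_right)

lemma compl_inf (a b : α) : (a ⊓ b)ᶜ = aᶜ ⊔ bᶜ := by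
  rw [← cc (aᶜ ⊔ bᶜ), compl_sup, cc, cc]

/-- dual orthomodular law -/
lemma dom {a b : α} (h : a ≤ b) : b ⊓ (bᶜ ⊔ a) = a := by
  have h2 := om (canti h)
  have h3 := congrArg (·ᶜ) h2
  simp only [compl_sup, compl_inf, cc] at h3
  exact h3

lemma sic {a w : α} (h : w ≤ aᶜ) : aᶜ ⊓ (a ⊔ w) = w := by
  have := dom h; rwa [cc] at this

lemma icompl {a : α} : a ⊓ aᶜ = ⊥ := CompleteOML.inf_compl a
lemma icompl' {a : α} : aᶜ ⊓ a = ⊥ := by rw [inf_comm]; exact icompl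

lemma sInf_eq_compl (U : Set α) : sInf U = (sSup (Compl.compl '' U))ᶜ := by
  apply le_antisymm
  · apply le_compl_swap
    apply sSup_le
    rintro v ⟨u, hu, rfl⟩
    exact le_compl_swap (le_trans (sInf_le hu) (le_of_eq (cc u).symm))
  · apply le_sInf
    intro u hu
    have : uᶜ ≤ sSup (Compl.compl '' U) := le_sSup ⟨u, hu, rfl⟩
    have := canti this; rwa [cc] at this

end OMLAux

open OMLAux in
/-- compact elements of L give interval-compact elements -/
lemma OMLAux.intv_compact_of_compact {α : Type*} [CompleteOML α] (x y z d : α) (hxy : x ≤ y)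
    (hd : IsCompactElement d) (hdz : d ≤ z) (hz : z ∈ Set.Icc x y) :
    IntvCompact x y (x ⊔ d) := by
  classical
  constructor
  · exact ⟨le_sup_left, sup_le hxy (hdz.trans hz.2)⟩
  · intro T hT hle
    have h1 : d ≤ sSup (insert x T) := by
      rw [sSup_insert]
      exact le_trans le_sup_right hle
    obtain ⟨t, htsub, hdt⟩ := (CompleteLattice.isCompactElement_iff_exists_le_sSup_of_le_sSup (k := d)).mp hd _ h1
    refine ⟨t.erase x, ?_, ?_⟩
    · intro w hw
      rw [Finset.coe_erase] at hw
      obtain ⟨hwt, hwx⟩ := hw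
      rcases htsub hwt with h | h
      · exact absurd h hwx
      · exact h
    · apply sup_le le_sup_left
      refine le_trans hdt ?_
      rw [Finset.sup_id_eq_sSup]
      apply sSup_le
      intro w hw
      by_cases hwx : w = x
      · rw [hwx]; exact le_sup_left
      · refine le_trans (le_sSup ?_) le_sup_right
        rw [Finset.coe_erase]
        exact ⟨hw, hwx⟩

open OMLAux in
lemma OMLAux.cha_transfer {α : Type*} [CompleteOML α] (x y : α) (hxy : x ≤ y)
    (H : ∀ S : Set α, ((∀ a ∈ S, aᶜ ∈ S) ∧ (∀ T : Set α, T ⊆ S → sSup T ∈ S) ∧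
        (∀ T : Set α, T ⊆ S → sInf T ∈ S)) →
        ∀ a ∈ S, a ≠ ⊥ → ∃ b ∈ S, b ≠ ⊥ ∧ (∀ s ∈ S, ¬ (⊥ < s ∧ s < b)) ∧ b ≤ a)
    (S : Set α) (hS : IntvCompleteSub x y S) : IntvAtomic x S := by
  obtain ⟨hSub, hCcl, hSupC, _⟩ := hS
  set m : α := xᶜ ⊓ y with hm
  have hmx : m ≤ xᶜ := inf_le_left
  have hmy : m ≤ y := inf_le_right
  have hmc : mᶜ = x ⊔ yᶜ := by rw [hm, compl_inf, cc]
  have hyx : (yᶜ : α) ≤ xᶜ := canti hxy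
  have hxmc : x ≤ mᶜ := by rw [hmc]; exact le_sup_left
  have hymc : (yᶜ : α) ≤ mᶜ := by rw [hmc]; exact le_sup_right
  -- component extraction
  have hext : ∀ Q X₀ Z₀ : α, Q ≤ m → (X₀ = ⊥ ∨ X₀ = x) → (Z₀ = ⊥ ∨ Z₀ = yᶜ) →
      (Q ⊔ X₀ ⊔ Z₀) ⊓ m = Q ∧ (Q ⊔ X₀ ⊔ Z₀) ⊓ x = X₀ ∧ (Q ⊔ X₀ ⊔ Z₀) ⊓ yᶜ = Z₀ := by
    intro Q X₀ Z₀ hQ hX hZ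
    have hXx : X₀ ≤ x := by rcases hX with h | h <;> rw [h]; exact bot_le
    have hZy : Z₀ ≤ yᶜ := by rcases hZ with h | h <;> rw [h]; exact bot_le
    refine ⟨?_, ?_, ?_⟩
    · have hR : X₀ ⊔ Z₀ ≤ mᶜ := sup_le (hXx.trans hxmc) (hZy.trans hymc)
      apply le_antisymm
      · rw [sup_assoc, inf_comm]
        calc m ⊓ (Q ⊔ (X₀ ⊔ Z₀)) ≤ m ⊓ (mᶜ ⊔ Q) := by
              apply inf_le_inf_left
              exact sup_le (le_sup_right) (hR.trans le_sup_left)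
          _ = Q := dom hQ
      · exact le_inf (le_sup_left.trans le_sup_left) hQ
    · rcases hX with h | h <;> rw [h]
      · rw [sup_bot_eq]
        have hle : Q ⊔ Z₀ ≤ xᶜ := sup_le (hQ.trans hmx) (hZy.trans hyx)
        have h2 : (Q ⊔ Z₀) ⊓ x ≤ xᶜ ⊓ x := inf_le_inf_right x hle
        rw [icompl'] at h2
        exact le_bot_iff.mp h2
      · exact inf_eq_right.mpr (le_sup_right.trans le_sup_left)
    · rcases hZ with h | h <;> rw [h]
      · rw [sup_bot_eq]
        have hle : Q ⊔ X₀ ≤ y := sup_le (hQ.trans hmy) (hXx.trans hxy)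
        have h2 : (Q ⊔ X₀) ⊓ yᶜ ≤ y ⊓ yᶜ := inf_le_inf_right _ hle
        rw [icompl] at h2
        exact le_bot_iff.mp h2
      · exact inf_eq_right.mpr le_sup_right
  set Sh : Set α := {a | x ⊔ (a ⊓ m) ∈ S ∧ (a ⊓ x = ⊥ ∨ a ⊓ x = x) ∧ (a ⊓ yᶜ = ⊥ ∨ a ⊓ yᶜ = yᶜ)
      ∧ a = (a ⊓ m) ⊔ (a ⊓ x) ⊔ (a ⊓ yᶜ)} with hSh
  have hmem : ∀ Q X₀ Z₀ : α, Q ≤ m → (X₀ = ⊥ ∨ X₀ = x) → (Z₀ = ⊥ ∨ Z₀ = yᶜ) →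
      x ⊔ Q ∈ S → Q ⊔ X₀ ⊔ Z₀ ∈ Sh := by
    intro Q X₀ Z₀ hQ hX hZ hQS
    obtain ⟨e1, e2, e3⟩ := hext Q X₀ Z₀ hQ hX hZ
    exact ⟨by rw [e1]; exact hQS, by rw [e2]; exact hX, by rw [e3]; exact hZ,
      by rw [e1, e2, e3]⟩
  have hSin : ∀ s ∈ S, xᶜ ⊓ s ∈ Sh := by
    intro s hs
    have hsx : x ≤ s := (hSub hs).1
    have hsy : s ≤ y := (hSub hs).2
    have hQ : xᶜ ⊓ s ≤ m := inf_le_inf_left _ hsy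
    have hQS : x ⊔ (xᶜ ⊓ s) ∈ S := by rw [om hsx]; exact hs
    have := hmem (xᶜ ⊓ s) ⊥ ⊥ hQ (Or.inl rfl) (Or.inl rfl) hQS
    simpa using this
  -- complement of a "q ≤ m" element
  have hqc : ∀ q : α, q ≤ m → qᶜ = (m ⊓ qᶜ) ⊔ x ⊔ yᶜ := by
    intro q hq
    have h1 : mᶜ ≤ qᶜ := canti hq
    have := om h1
    rw [cc] at this
    rw [sup_assoc, ← hmc, sup_comm]
    exact this.symm
  -- x ⊔ (m ⊓ qᶜ) ∈ S when q = a ⊓ m with x ⊔ q ∈ S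
  have hqS : ∀ q : α, q ≤ m → x ⊔ q ∈ S → x ⊔ (m ⊓ qᶜ) ∈ S := by
    intro q hq hqs
    have := hCcl _ hqs
    have heq : intvCompl x y (x ⊔ q) = x ⊔ (m ⊓ qᶜ) := by
      rw [intvCompl, compl_sup]
      congr 1
      rw [hm]
      ac_rfl
    rwa [heq] at this
  -- Sh is closed under complement
  have hCl1 : ∀ a ∈ Sh, aᶜ ∈ Sh := by
    intro a ha
    obtain ⟨h1, h2, h3, h4⟩ := ha
    set q : α := a ⊓ m with hq
    have hqm : q ≤ m := inf_le_right
    have hS' : x ⊔ (m ⊓ qᶜ) ∈ S := hqS q hqm h1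
    have hmq : m ⊓ qᶜ ≤ m := inf_le_left
    rcases h2 with hx0 | hx0 <;> rcases h3 with hz0 | hz0
    · -- a = q
      have ha : a = q := by rw [h4, hx0, hz0]; simp
      have : aᶜ = (m ⊓ qᶜ) ⊔ x ⊔ yᶜ := by rw [ha]; exact hqc q hqm
      rw [this]
      exact hmem _ _ _ hmq (Or.inr rfl) (Or.inr rfl) hS'
    · -- a = q ⊔ yᶜ
      have ha : a = q ⊔ yᶜ := by rw [h4, hx0, hz0]; simp
      have hw : (m ⊓ qᶜ) ⊔ x ≤ y := sup_le (hmq.trans hmy) hxy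
      have hcalc : aᶜ = (m ⊓ qᶜ) ⊔ x := by
        calc aᶜ = (q ⊔ yᶜ)ᶜ := by rw [ha]
          _ = qᶜ ⊓ y := by rw [compl_sup, cc]
          _ = ((m ⊓ qᶜ) ⊔ x ⊔ yᶜ) ⊓ y := by rw [← hqc q hqm]
          _ = y ⊓ (yᶜ ⊔ ((m ⊓ qᶜ) ⊔ x)) := by ac_rfl
          _ = (m ⊓ qᶜ) ⊔ x := dom hw
      have hmm := hmem (m ⊓ qᶜ) x ⊥ hmq (Or.inr rfl) (Or.inl rfl) hS'
      rw [sup_bot_eq] at hmm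
      rw [hcalc]
      exact hmm
    · -- a = q ⊔ x
      have ha : a = q ⊔ x := by rw [h4, hx0, hz0]; simp
      have hw : (m ⊓ qᶜ) ⊔ yᶜ ≤ xᶜ := sup_le (hmq.trans hmx) hyx
      have hcalc : aᶜ = (m ⊓ qᶜ) ⊔ ⊥ ⊔ yᶜ := by
        calc aᶜ = (q ⊔ x)ᶜ := by rw [ha]
          _ = qᶜ ⊓ xᶜ := by rw [compl_sup]
          _ = ((m ⊓ qᶜ) ⊔ x ⊔ yᶜ) ⊓ xᶜ := by rw [← hqc q hqm]
          _ = xᶜ ⊓ (x ⊔ ((m ⊓ qᶜ) ⊔ yᶜ)) := by ac_rfl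
          _ = (m ⊓ qᶜ) ⊔ yᶜ := sic hw
          _ = (m ⊓ qᶜ) ⊔ ⊥ ⊔ yᶜ := by rw [sup_bot_eq]
      rw [hcalc]
      exact hmem _ _ _ hmq (Or.inl rfl) (Or.inr rfl) hS'
    · -- a = q ⊔ x ⊔ yᶜ
      have ha : a = q ⊔ x ⊔ yᶜ := by rw [h4, hx0, hz0]
      have hcalc : aᶜ = (m ⊓ qᶜ) ⊔ ⊥ ⊔ ⊥ := by
        rw [ha, compl_sup, compl_sup, cc, sup_bot_eq, sup_bot_eq, hm]
        ac_rfl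
      rw [hcalc]
      exact hmem _ _ _ hmq (Or.inl rfl) (Or.inl rfl) hS'
  -- Sh is closed under sSup
  have hCl2 : ∀ U : Set α, U ⊆ Sh → sSup U ∈ Sh := by
    intro U hU
    have hdec : ∀ u ∈ U, u = (u ⊓ m) ⊔ (u ⊓ x) ⊔ (u ⊓ yᶜ) := fun u hu => (hU hu).2.2.2
    have hQm : (⨆ u ∈ U, u ⊓ m) ≤ m := iSup₂_le fun u _ => inf_le_right
    have hXcase : (⨆ u ∈ U, u ⊓ x) = ⊥ ∨ (⨆ u ∈ U, u ⊓ x) = x := by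
      by_cases hex : ∃ u ∈ U, u ⊓ x = x
      · right
        obtain ⟨u, hu, hux⟩ := hex
        apply le_antisymm (iSup₂_le fun a _ => inf_le_right)
        calc x = u ⊓ x := hux.symm
          _ ≤ ⨆ u ∈ U, u ⊓ x := le_biSup (fun u => u ⊓ x) hu
      · left
        apply le_bot_iff.mp
        apply iSup₂_le; intro u hu
        rcases (hU hu).2.1 with h | h
        · rw [h]
        · exact absurd ⟨u, hu, h⟩ hex
    have hZcase : (⨆ u ∈ U, u ⊓ yᶜ) = ⊥ ∨ (⨆ u ∈ U, u ⊓ yᶜ) = yᶜ := by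
      by_cases hex : ∃ u ∈ U, u ⊓ yᶜ = yᶜ
      · right
        obtain ⟨u, hu, hux⟩ := hex
        apply le_antisymm (iSup₂_le fun a _ => inf_le_right)
        calc yᶜ = u ⊓ yᶜ := hux.symm
          _ ≤ ⨆ u ∈ U, u ⊓ yᶜ := le_biSup (fun u => u ⊓ yᶜ) hu
      · left
        apply le_bot_iff.mp
        apply iSup₂_le; intro u hu
        rcases (hU hu).2.2.1 with h | h
        · rw [h]
        · exact absurd ⟨u, hu, h⟩ hex
    have hsup : sSup U = (⨆ u ∈ U, u ⊓ m) ⊔ (⨆ u ∈ U, u ⊓ x) ⊔ (⨆ u ∈ U, u ⊓ yᶜ) := by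
      apply le_antisymm
      · apply sSup_le; intro u hu
        calc u = (u ⊓ m) ⊔ (u ⊓ x) ⊔ (u ⊓ yᶜ) := hdec u hu
          _ ≤ _ := sup_le_sup (sup_le_sup (le_biSup (fun u => u ⊓ m) hu) (le_biSup (fun u => u ⊓ x) hu)) (le_biSup (fun u => u ⊓ yᶜ) hu)
      · exact sup_le (sup_le (iSup₂_le fun u hu => inf_le_left.trans (le_sSup hu))
          (iSup₂_le fun u hu => inf_le_left.trans (le_sSup hu)))
          (iSup₂_le fun u hu => inf_le_left.trans (le_sSup hu))
    have hQS : x ⊔ (⨆ u ∈ U, u ⊓ m) ∈ S := by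
      have hTsub : {b | ∃ u ∈ U, b = x ⊔ (u ⊓ m)} ⊆ S := by
        rintro b ⟨u, hu, rfl⟩; exact (hU hu).1
      have hmemS := hSupC _ hTsub
      have heq : x ⊔ sSup {b | ∃ u ∈ U, b = x ⊔ (u ⊓ m)} = x ⊔ ⨆ u ∈ U, u ⊓ m := by
        apply le_antisymm
        · apply sup_le le_sup_left
          apply sSup_le; rintro b ⟨u, hu, rfl⟩
          exact sup_le le_sup_left ((le_biSup (fun u => u ⊓ m) hu).trans le_sup_right)
        · apply sup_le le_sup_left
          refine le_trans ?_ le_sup_right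
          exact iSup₂_le fun u hu => le_trans le_sup_right (le_sSup ⟨u, hu, rfl⟩)
      rwa [heq] at hmemS
    rw [hsup]
    exact hmem _ _ _ hQm hXcase hZcase hQS
  -- Sh is closed under sInf
  have hCl3 : ∀ U : Set α, U ⊆ Sh → sInf U ∈ Sh := by
    intro U hU
    rw [sInf_eq_compl]
    apply hCl1
    apply hCl2
    rintro v ⟨u, hu, rfl⟩
    exact hCl1 u (hU hu)
  -- transfer atoms
  intro z hz hzx
  have hzI := hSub hz
  have hzS : xᶜ ⊓ z ∈ Sh := hSin z hz
  have hznb : xᶜ ⊓ z ≠ ⊥ := by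
    intro h
    apply hzx
    have := om hzI.1
    rw [h, sup_bot_eq] at this
    exact this.symm
  obtain ⟨b, hbSh, hbne, hbmin, hble⟩ := H Sh ⟨hCl1, hCl2, hCl3⟩ _ hzS hznb
  have hbx : b ≤ xᶜ := hble.trans inf_le_left
  have hbz : b ≤ z := hble.trans inf_le_right
  have hbm : b ⊓ m = b := inf_eq_left.mpr (le_inf hbx (hbz.trans hzI.2))
  have haS : x ⊔ b ∈ S := by
    have h1 := hbSh.1
    rwa [hbm] at h1
  refine ⟨x ⊔ b, haS, ?_, ?_, sup_le hzI.1 hbz⟩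
  · intro h
    apply hbne
    have hbxle : b ≤ x := le_sup_right.trans h.le
    have : b ≤ xᶜ ⊓ x := le_inf hbx hbxle
    rw [icompl'] at this
    exact le_bot_iff.mp this
  · rintro s hsS ⟨hxs, hsa⟩
    apply hbmin (xᶜ ⊓ s) (hSin s hsS)
    constructor
    · rw [bot_lt_iff_ne_bot]
      intro h
      have heq := om (hSub hsS).1
      rw [h, sup_bot_eq] at heq
      exact (ne_of_gt hxs) heq.symm
    · have hle : xᶜ ⊓ s ≤ b := by
        have h2 := inf_le_inf_left xᶜ hsa.le
        rwa [sic hbx] at h2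
      apply lt_of_le_of_ne hle
      intro h
      apply ne_of_lt hsa
      have heq := om (hSub hsS).1
      rw [h] at heq
      exact heq.symm


open OMLAux in
/-- for `x ≤ y` in a complete OML `L`, the interval `[x, y]` with the
induced order and the orthocomplementation `z ↦ x ⊔ (zᶜ ⊓ y)` is a complete OML
(suprema in the interval are given by `T ↦ x ⊔ sSup T` and infima by `T ↦ y ⊓ sInf T`);
moreover if `L` is algebraic then so is `[x, y]`, and if `L` is completely hereditarily
atomic then so is `[x, y]`. -/
theorem interval_completeOML {α : Type*} [CompleteOML α] (x y : α) (hxy : x ≤ y) :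
    -- [x, y] is a complete lattice: x ⊔ sSup T is the least upper bound of T in [x, y]
    (∀ T : Set α, T ⊆ Set.Icc x y → x ⊔ sSup T ∈ Set.Icc x y ∧
      (∀ t ∈ T, t ≤ x ⊔ sSup T) ∧ ∀ u ∈ Set.Icc x y, (∀ t ∈ T, t ≤ u) → x ⊔ sSup T ≤ u) ∧
    -- and y ⊓ sInf T is the greatest lower bound of T in [x, y]
    (∀ T : Set α, T ⊆ Set.Icc x y → y ⊓ sInf T ∈ Set.Icc x y ∧
      (∀ t ∈ T, y ⊓ sInf T ≤ t) ∧ ∀ u ∈ Set.Icc x y, (∀ t ∈ T, u ≤ t) → u ≤ y ⊓ sInf T) ∧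
    -- z ↦ x ⊔ (zᶜ ⊓ y) is an orthocomplementation of [x, y]
    (∀ z ∈ Set.Icc x y, intvCompl x y z ∈ Set.Icc x y) ∧
    (∀ z ∈ Set.Icc x y, intvCompl x y (intvCompl x y z) = z) ∧
    (∀ z ∈ Set.Icc x y, ∀ w ∈ Set.Icc x y, z ≤ w → intvCompl x y w ≤ intvCompl x y z) ∧
    (∀ z ∈ Set.Icc x y, z ⊓ intvCompl x y z = x) ∧
    (∀ z ∈ Set.Icc x y, z ⊔ intvCompl x y z = y) ∧
    -- the orthomodular law holds in [x, y]
    (∀ z ∈ Set.Icc x y, ∀ w ∈ Set.Icc x y, z ≤ w → z ⊔ (intvCompl x y z ⊓ w) = w) ∧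
    -- if L is algebraic then [x, y] is algebraic
    (IsAlgebraicLattice α →
      ∀ z ∈ Set.Icc x y, z = x ⊔ sSup {c : α | IntvCompact x y c ∧ c ≤ z}) ∧
    -- if L is completely hereditarily atomic then so is [x, y]
    ((∀ S : Set α, ((∀ a ∈ S, aᶜ ∈ S) ∧ (∀ T : Set α, T ⊆ S → sSup T ∈ S) ∧
        (∀ T : Set α, T ⊆ S → sInf T ∈ S)) →
        ∀ a ∈ S, a ≠ ⊥ → ∃ b ∈ S, b ≠ ⊥ ∧ (∀ s ∈ S, ¬ (⊥ < s ∧ s < b)) ∧ b ≤ a) →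
      ∀ S : Set α, IntvCompleteSub x y S → IntvAtomic x S) := by
  classical
  have hymc : (yᶜ : α) ≤ xᶜ := canti hxy
  refine ⟨?_, ?_, ?_, ?_, ?_, ?_, ?_, ?_, ?_, ?_⟩
  · -- sup is lub
    intro T hT
    refine ⟨⟨le_sup_left, sup_le hxy (sSup_le fun t ht => (hT ht).2)⟩, ?_, ?_⟩
    · exact fun t ht => le_trans (le_sSup ht) le_sup_right
    · intro u hu hub
      exact sup_le hu.1 (sSup_le hub)
  · -- inf is glb
    intro T hT
    refine ⟨⟨le_inf hxy (le_sInf fun t ht => (hT ht).1), inf_le_left⟩, ?_, ?_⟩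
    · exact fun t ht => le_trans inf_le_right (sInf_le ht)
    · intro u hu hlb
      exact le_inf hu.2 (le_sInf hlb)
  · -- compl maps into the interval
    intro z _
    exact ⟨le_sup_left, sup_le hxy inf_le_right⟩
  · -- compl is involutive
    intro z hz
    rw [intvCompl, intvCompl, OMLAux.compl_sup, OMLAux.compl_inf, cc]
    have h1 : (xᶜ ⊓ (z ⊔ yᶜ)) ⊓ y = xᶜ ⊓ z := by
      rw [inf_assoc]
      congr 1
      rw [inf_comm (z ⊔ yᶜ) y, sup_comm z yᶜ]
      exact dom hz.2
    rw [h1]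
    exact om hz.1
  · -- compl is antitone
    intro z _ w _ hzw
    exact sup_le_sup_left (inf_le_inf_right _ (canti hzw)) _
  · -- z ⊓ zᶜ = x
    intro z hz
    apply le_antisymm
    · calc z ⊓ intvCompl x y z ≤ z ⊓ (zᶜ ⊔ x) := by
            rw [intvCompl]
            apply inf_le_inf_left
            rw [sup_comm]
            exact sup_le_sup_right inf_le_left _
        _ = x := dom hz.1
    · exact le_inf hz.1 le_sup_left
  · -- z ⊔ zᶜ = y
    intro z hz
    rw [intvCompl, ← sup_assoc, sup_comm z x, sup_assoc, om hz.2, sup_eq_right]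
    exact hxy
  · -- orthomodular law
    intro z hz w hw hzw
    apply le_antisymm (sup_le hzw inf_le_right)
    have h1 : zᶜ ⊓ w ≤ intvCompl x y z ⊓ w :=
      le_inf (le_trans (inf_le_inf_left _ hw.2) le_sup_right) inf_le_right
    calc w = z ⊔ (zᶜ ⊓ w) := (om hzw).symm
      _ ≤ z ⊔ (intvCompl x y z ⊓ w) := sup_le_sup_left h1 _
  · -- algebraic
    intro halg z hz
    apply le_antisymm
    · conv_lhs => rw [halg z]
      apply le_trans ?_ le_sup_right
      apply sSup_le
      rintro d ⟨hd, hdz⟩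
      have hmem : x ⊔ d ∈ {c : α | IntvCompact x y c ∧ c ≤ z} :=
        ⟨intv_compact_of_compact x y z d hxy hd hdz hz, sup_le hz.1 hdz⟩
      exact le_trans le_sup_right (le_sSup hmem)
    · apply sup_le hz.1
      apply sSup_le
      rintro c ⟨_, hcz⟩
      exact hcz
  · -- completely hereditarily atomic
    intro H S hS
    exact cha_transfer x y hxy H S hS
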